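/- (Lemma 3 of the paper: Schur-complement reformulation of the coupling constraint F = BWBᵀ) Let B be a p×n matrix with real entries (viewed as a complex matrix, so Bᴴ = Bᵀ), let W ∈ ℂ^{n×n}, and let F ∈ ℂ^{p×p}. Then F = B W Bᵀ holds if and only if there exist matrices S, T ∈ ℂ^{p×p} such that the (2p+n)×(2p+n) block matrix with block rows [S, F, BW], [Fᴴ, T, B], [WᴴBᵀ, Bᵀ, I_n] is positive semidefinite and Tr(S − B W Wᴴ Bᵀ) ≤ 0. -/

import Mathlib

open Matrix
open scoped ComplexOrder

lemma myFromColumns_fromRows_comm {R : Type*} {m₁ m₂ n₁ n₂ : Type*}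
    (A₁ : Matrix m₁ n₁ R) (A₂ : Matrix m₂ n₁ R) (B₁ : Matrix m₁ n₂ R) (B₂ : Matrix m₂ n₂ R) :
    fromCols (fromRows A₁ A₂) (fromRows B₁ B₂) =
      fromRows (fromCols A₁ B₁) (fromCols A₂ B₂) := by
  ext (i | i) (j | j) <;> rfl


lemma trace_conjTranspose_mul_self_le_zero {m k : Type*} [Fintype m] [Fintype k]
    (P : Matrix m k ℂ) (h : (Pᴴ * P).trace ≤ 0) : P = 0 := by
  have htr : (Pᴴ * P).trace = ((∑ j, ∑ i, Complex.normSq (P i j) : ℝ) : ℂ) := by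
    simp only [Matrix.trace, Matrix.diag, Matrix.mul_apply, Matrix.conjTranspose_apply,
      Complex.ofReal_sum]
    congr 1; ext j; congr 1; ext i
    rw [Complex.star_def, mul_comm, Complex.mul_conj]
  rw [htr] at h
  have h' : (∑ j, ∑ i, Complex.normSq (P i j) : ℝ) ≤ 0 := by
    exact_mod_cast h
  have h0 : (∑ j, ∑ i, Complex.normSq (P i j) : ℝ) = 0 :=
    le_antisymm h' (Finset.sum_nonneg fun j _ => Finset.sum_nonneg fun i _ => Complex.normSq_nonneg _)
  ext i j
  have := (Finset.sum_eq_zero_iff_of_nonneg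
      (fun j _ => Finset.sum_nonneg fun i _ => Complex.normSq_nonneg (P i j))).mp h0 j
      (Finset.mem_univ _)
  have := (Finset.sum_eq_zero_iff_of_nonneg
      (fun i _ => Complex.normSq_nonneg (P i j))).mp this i (Finset.mem_univ _)
  simpa [Complex.normSq_eq_zero] using this

open scoped MatrixOrder in
lemma my_psd_eq_conjTranspose_mul_self {m : Type*} [Fintype m] [DecidableEq m]
    (A : Matrix m m ℂ) (h : A.PosSemidef) : ∃ B : Matrix m m ℂ, A = Bᴴ * B := by
  obtain ⟨B, rfl⟩ := CStarAlgebra.nonneg_iff_eq_star_mul_self.mp h.nonneg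
  exact ⟨B, rfl⟩

lemma key_schur {p n : ℕ}
    (Bc : Matrix (Fin p) (Fin n) ℂ) (hBc : Bcᴴ = Bcᵀ)
    (W : Matrix (Fin n) (Fin n) ℂ)
    (F : Matrix (Fin p) (Fin p) ℂ) :
    F = Bc * W * Bcᵀ ↔
      ∃ S T : Matrix (Fin p) (Fin p) ℂ,
        (fromBlocks S
            (fromCols F (Bc * W))
            (fromRows Fᴴ (Wᴴ * Bcᵀ))
            (fromBlocks T Bc Bcᵀ
              (1 : Matrix (Fin n) (Fin n) ℂ))).PosSemidef ∧
        (S - Bc * W * Wᴴ * Bcᵀ).trace ≤ 0 := by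
  constructor
  · rintro rfl
    refine ⟨Bc * W * Wᴴ * Bcᵀ, Bc * Bcᵀ, ?_, by simp⟩
    have h : fromBlocks (Bc * W * Wᴴ * Bcᵀ)
        (fromCols (Bc * W * Bcᵀ) (Bc * W))
        (fromRows (Bc * W * Bcᵀ)ᴴ (Wᴴ * Bcᵀ))
        (fromBlocks (Bc * Bcᵀ) Bc Bcᵀ 1) =
        fromRows (Bc * W) (fromRows Bc 1) * (fromRows (Bc * W) (fromRows Bc 1))ᴴ := by
      simp only [conjTranspose_fromRows_eq_fromCols_conjTranspose, fromRows_mul,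
        mul_fromCols, conjTranspose_one, conjTranspose_mul, hBc, Matrix.mul_one,
        Matrix.one_mul, ← fromRows_fromCols_eq_fromBlocks, myFromColumns_fromRows_comm]
      have hBc2 : Bcᵀᴴ = Bc := by rw [← hBc, conjTranspose_conjTranspose]
      simp [hBc2, Matrix.mul_assoc]
    rw [h]
    exact posSemidef_self_mul_conjTranspose _
  · rintro ⟨S, T, hM, htr⟩
    have hBc2 : Bcᵀᴴ = Bc := by rw [← hBc, conjTranspose_conjTranspose]
    obtain ⟨R, hR⟩ := my_psd_eq_conjTranspose_mul_self _ hM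
    set R₁ := R.toCols₁ with hR₁
    set R₂ := R.toCols₂.toCols₁ with hR₂
    set R₃ := R.toCols₂.toCols₂ with hR₃
    have hRdec : R = fromCols R₁ (fromCols R₂ R₃) := by
      rw [hR₂, hR₃, fromCols_toCols, hR₁, fromCols_toCols]
    rw [hRdec] at hR
    simp only [conjTranspose_fromCols_eq_fromRows_conjTranspose, fromRows_mul,
      mul_fromCols, fromRows_fromCols_eq_fromBlocks] at hR
    have hent : ∀ i j, (Matrix.fromBlocks S (F.fromCols (Bc * W)) (Fᴴ.fromRows (Wᴴ * Bcᵀ))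
        (Matrix.fromBlocks T Bc Bcᵀ 1)) i j =
        (((R₁ᴴ * R₁).fromRows ((R₂ᴴ * R₁).fromRows (R₃ᴴ * R₁))).fromCols
          (((R₁ᴴ * R₂).fromRows ((R₂ᴴ * R₂).fromRows (R₃ᴴ * R₂))).fromCols
            ((R₁ᴴ * R₃).fromRows ((R₂ᴴ * R₃).fromRows (R₃ᴴ * R₃))))) i j :=
      fun i j => congrFun (congrFun hR i) j
    have hS : S = R₁ᴴ * R₁ := by
      ext i j; simpa using hent (Sum.inl i) (Sum.inl j)
    have hF : F = R₁ᴴ * R₂ := by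
      ext i j; simpa using hent (Sum.inl i) (Sum.inr (Sum.inl j))
    have hBW : Bc * W = R₁ᴴ * R₃ := by
      ext i j; simpa using hent (Sum.inl i) (Sum.inr (Sum.inr j))
    have hb : Bc = R₂ᴴ * R₃ := by
      ext i j; simpa using hent (Sum.inr (Sum.inl i)) (Sum.inr (Sum.inr j))
    have hbt : Bcᵀ = R₃ᴴ * R₂ := by
      ext i j; simpa using hent (Sum.inr (Sum.inr i)) (Sum.inr (Sum.inl j))
    have h1 : (1 : Matrix (Fin n) (Fin n) ℂ) = R₃ᴴ * R₃ := by
      ext i j; simpa using hent (Sum.inr (Sum.inr i)) (Sum.inr (Sum.inr j))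
    have hWB : Wᴴ * Bcᵀ = R₃ᴴ * R₁ := by
      ext i j; simpa using hent (Sum.inr (Sum.inr i)) (Sum.inl j)
    set P₁ := R₁ - R₃ * (Wᴴ * Bcᵀ) with hP₁
    set P₂ := R₂ - R₃ * Bcᵀ with hP₂
    have hct : (Wᴴ * Bcᵀ)ᴴ = Bc * W := by
      rw [conjTranspose_mul, conjTranspose_conjTranspose, hBc2]
    have m1 : R₃ᴴ * (R₃ * (Wᴴ * Bcᵀ)) = Wᴴ * Bcᵀ := by
      rw [← Matrix.mul_assoc, ← h1, Matrix.one_mul]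
    have m2 : R₃ᴴ * (R₃ * Bcᵀ) = Bcᵀ := by
      rw [← Matrix.mul_assoc, ← h1, Matrix.one_mul]
    have e1 : P₁ᴴ * P₁ = S - Bc * W * Wᴴ * Bcᵀ := by
      rw [hP₁, conjTranspose_sub, conjTranspose_mul, hct, Matrix.sub_mul, Matrix.mul_sub,
        Matrix.mul_sub, Matrix.mul_assoc (Bc * W) R₃ᴴ R₁,
        Matrix.mul_assoc (Bc * W) R₃ᴴ (R₃ * (Wᴴ * Bcᵀ)), m1,
        ← Matrix.mul_assoc R₁ᴴ R₃ (Wᴴ * Bcᵀ), ← hWB, ← hBW, ← hS,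
        Matrix.mul_assoc (Bc * W) Wᴴ Bcᵀ, sub_self, sub_zero]
    have e2 : P₁ᴴ * P₂ = F - Bc * W * Bcᵀ := by
      rw [hP₁, hP₂, conjTranspose_sub, conjTranspose_mul, hct, Matrix.sub_mul, Matrix.mul_sub,
        Matrix.mul_sub, Matrix.mul_assoc (Bc * W) R₃ᴴ R₂,
        Matrix.mul_assoc (Bc * W) R₃ᴴ (R₃ * Bcᵀ), m2, ← Matrix.mul_assoc R₁ᴴ R₃ Bcᵀ,
        ← hbt, ← hBW, ← hF, sub_self, sub_zero]
    have hP₁0 : P₁ = 0 := by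
      apply trace_conjTranspose_mul_self_le_zero
      rw [e1]; exact htr
    have : F - Bc * W * Bcᵀ = 0 := by
      rw [← e2, hP₁0, conjTranspose_zero, Matrix.zero_mul]
    exact sub_eq_zero.mp this


/-- Lemma 3 of the paper: Schur-complement reformulation of the coupling
constraint F = B W Bᵀ. -/
theorem schur_coupling_constraint {p n : ℕ}
    (B : Matrix (Fin p) (Fin n) ℝ)
    (W : Matrix (Fin n) (Fin n) ℂ)
    (F : Matrix (Fin p) (Fin p) ℂ) :
    F = B.map Complex.ofReal * W * (B.map Complex.ofReal)ᵀ ↔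
      ∃ S T : Matrix (Fin p) (Fin p) ℂ,
        (fromBlocks S
            (fromCols F (B.map Complex.ofReal * W))
            (fromRows Fᴴ (Wᴴ * (B.map Complex.ofReal)ᵀ))
            (fromBlocks T (B.map Complex.ofReal) (B.map Complex.ofReal)ᵀ
              (1 : Matrix (Fin n) (Fin n) ℂ))).PosSemidef ∧
        (S - B.map Complex.ofReal * W * Wᴴ * (B.map Complex.ofReal)ᵀ).trace ≤ 0 := by
  refine key_schur _ ?_ W F
  ext i j
  simp [conjTranspose_apply, Complex.conj_ofReal]
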